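/- Let G be a topological group, let G° denote the identity component of G, and let u be an element of G°. Then the inclusion Z_{G°}(u) ⊆ Z_G(u) induces a well-defined injective group homomorphism of component groups A_{G°}(u) → A_G(u), where A_G(u) := Z_G(u)/Z_G(u)° and A_{G°}(u) := Z_{G°}(u)/Z_{G°}(u)°. -/

import Mathlib

/-- The identity component of a topological group is a normal subgroup. -/
instance connectedComponentOfOne_normal
    (G : Type*) [Group G] [TopologicalSpace G] [IsTopologicalGroup G] :
    (Subgroup.connectedComponentOfOne G).Normal := by
  constructor
  intro n hn g
  have hc : Continuous fun x : G => g * x * g⁻¹ := by fun_prop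
  have h := hc.image_connectedComponent_subset (1 : G)
  have : g * n * g⁻¹ ∈ connectedComponent (g * 1 * g⁻¹) := h ⟨n, hn, rfl⟩
  simp at this
  exact this

/-- Membership in the identity component of a subgroup, in terms of
`connectedComponentIn`. -/
lemma mem_connectedComponentOfOne_iff
    {G : Type*} [Group G] [TopologicalSpace G] [IsTopologicalGroup G]
    (K : Subgroup G) (x : ↥K) :
    x ∈ Subgroup.connectedComponentOfOne ↥K ↔
      (x : G) ∈ connectedComponentIn (K : Set G) 1 := by
  rw [connectedComponentIn_eq_image (K.one_mem)]
  constructor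
  · intro hx
    exact ⟨x, hx, rfl⟩
  · rintro ⟨y, hy, hxy⟩
    have : y = x := Subtype.ext hxy
    rw [← this]
    exact hy

/-- Let `G` be a topological group, `G°` its identity component, and `u ∈ G°`.
Then the inclusion `Z_{G°}(u) ⊆ Z_G(u)` of centralizers induces a well-defined
injective group homomorphism of component groups
`A_{G°}(u) = Z_{G°}(u)/Z_{G°}(u)° → A_G(u) = Z_G(u)/Z_G(u)°`. -/
theorem componentGroup_injection
    {G : Type*} [Group G] [TopologicalSpace G] [IsTopologicalGroup G] (u : G)
    (hu : u ∈ Subgroup.connectedComponentOfOne G) :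
    ∃ f : (↥(Subgroup.centralizer {u} ⊓ Subgroup.connectedComponentOfOne G) ⧸
            Subgroup.connectedComponentOfOne
              ↥(Subgroup.centralizer {u} ⊓ Subgroup.connectedComponentOfOne G)) →*
          (↥(Subgroup.centralizer {u}) ⧸
            Subgroup.connectedComponentOfOne ↥(Subgroup.centralizer {u})),
      Function.Injective f ∧
      ∀ x : ↥(Subgroup.centralizer {u} ⊓ Subgroup.connectedComponentOfOne G),
        f (QuotientGroup.mk x) =
          QuotientGroup.mk (Subgroup.inclusion inf_le_left x) := by
  set Z := Subgroup.centralizer {u}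
  set H := Z ⊓ Subgroup.connectedComponentOfOne G
  -- H° = Z° as subsets of G, via connectedComponentIn
  have hHZ : connectedComponentIn (H : Set G) 1 ⊆ connectedComponentIn (Z : Set G) 1 :=
    connectedComponentIn_mono 1 (by exact_mod_cast inf_le_left)
  have hZH : connectedComponentIn (Z : Set G) 1 ⊆ connectedComponentIn (H : Set G) 1 := by
    apply IsPreconnected.subset_connectedComponentIn isPreconnected_connectedComponentIn
      (mem_connectedComponentIn Z.one_mem)
    intro x hx
    refine ⟨connectedComponentIn_subset _ _ hx, ?_⟩
    have : connectedComponentIn (Z : Set G) 1 ⊆ connectedComponent (1 : G) :=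
      IsPreconnected.subset_connectedComponent isPreconnected_connectedComponentIn
        (mem_connectedComponentIn Z.one_mem)
    exact this hx
  -- the induced map
  have hcond : Subgroup.connectedComponentOfOne ↥H ≤
      (Subgroup.connectedComponentOfOne ↥Z).comap (Subgroup.inclusion (inf_le_left : H ≤ Z)) := by
    intro x hx
    rw [Subgroup.mem_comap, mem_connectedComponentOfOne_iff]
    exact hHZ ((mem_connectedComponentOfOne_iff H x).mp hx)
  refine ⟨QuotientGroup.map _ _ (Subgroup.inclusion inf_le_left) hcond, ?_, fun x => rfl⟩
  -- injectivity
  intro a b hab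
  induction a using QuotientGroup.induction_on with
  | H x =>
  induction b using QuotientGroup.induction_on with
  | H y =>
  simp only [QuotientGroup.map_mk] at hab
  rw [QuotientGroup.eq] at hab ⊢
  rw [mem_connectedComponentOfOne_iff]
  have := (mem_connectedComponentOfOne_iff Z _).mp hab
  exact hZH this
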